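/- Let T: 𝕋 → 𝕋 be continuous with finite fibers, X ⊂ 𝕋 an infinite rotational proper subset with 0 ∉ X, α = inf X, β = sup X in [0,1). Then α < T(β) ≤ T(α) < β. -/
import Mathlib


open Set Filter MeasureTheory

noncomputable def rep (z : UnitAddCircle) : ℝ := (AddCircle.equivIco 1 0 z : ℝ)

lemma coe_rep (z : UnitAddCircle) : ((rep z : ℝ) : UnitAddCircle) = z := by
  exact (AddCircle.equivIco 1 0).symm_apply_apply z

lemma rep_mem (z : UnitAddCircle) : rep z ∈ Set.Ico (0:ℝ) 1 := by
  have h := (AddCircle.equivIco 1 0 z).2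
  simpa [rep] using h

lemma rep_coe {r : ℝ} (hr : r ∈ Set.Ico (0:ℝ) 1) : rep ((r : ℝ) : UnitAddCircle) = r := by
  have : (AddCircle.equivIco 1 0 ((r:ℝ) : UnitAddCircle) : ℝ) = toIcoMod one_pos 0 r := rfl
  rw [rep, this, toIcoMod_eq_self]
  simpa using hr

lemma btw_coe_iff'' {a b c : ℝ} :
    Btw.btw ((a:ℝ) : UnitAddCircle) ((b:ℝ) : UnitAddCircle) ((c:ℝ) : UnitAddCircle) ↔
      toIcoMod one_pos a b ≤ toIocMod one_pos a c :=
  QuotientAddGroup.btw_coe_iff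

lemma toIcoMod01 {x y : ℝ} (hx : x ∈ Set.Ico (0:ℝ) 1) (hy : y ∈ Set.Ico (0:ℝ) 1) :
    toIcoMod one_pos x y = if x ≤ y then y else y + 1 := by
  obtain ⟨hx0, hx1⟩ := hx; obtain ⟨hy0, hy1⟩ := hy
  split_ifs with h
  · rw [toIcoMod_eq_self]; constructor <;> linarith
  · rw [← toIcoMod_add_right, toIcoMod_eq_self]; constructor <;> linarith

lemma toIocMod01 {x y : ℝ} (hx : x ∈ Set.Ico (0:ℝ) 1) (hy : y ∈ Set.Ico (0:ℝ) 1) :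
    toIocMod one_pos x y = if x < y then y else y + 1 := by
  obtain ⟨hx0, hx1⟩ := hx; obtain ⟨hy0, hy1⟩ := hy
  split_ifs with h
  · rw [toIocMod_eq_self]; constructor <;> linarith
  · rw [← toIocMod_add_right, toIocMod_eq_self]; constructor <;> linarith

lemma sbtw_coe_iff {a b c : ℝ} (ha : a ∈ Set.Ico (0:ℝ) 1) (hb : b ∈ Set.Ico (0:ℝ) 1)
    (hc : c ∈ Set.Ico (0:ℝ) 1) :
    sbtw ((a:ℝ) : UnitAddCircle) ((b:ℝ) : UnitAddCircle) ((c:ℝ) : UnitAddCircle) ↔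
      (a < b ∧ b < c) ∨ (b < c ∧ c < a) ∨ (c < a ∧ a < b) := by
  rw [sbtw_iff_btw_not_btw, btw_coe_iff'', btw_coe_iff'',
    toIcoMod01 ha hb, toIocMod01 ha hc, toIcoMod01 hc hb, toIocMod01 hc ha]
  obtain ⟨ha0, ha1⟩ := ha; obtain ⟨hb0, hb1⟩ := hb; obtain ⟨hc0, hc1⟩ := hc
  constructor
  · rintro ⟨h, h2⟩
    split_ifs at h h2 <;> push_neg at h2 <;>
      first
        | (left; exact ⟨by linarith, by linarith⟩)
        | (right; left; exact ⟨by linarith, by linarith⟩)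
        | (right; right; exact ⟨by linarith, by linarith⟩)
        | (exfalso; linarith)
  · rintro (⟨h1, h2⟩ | ⟨h1, h2⟩ | ⟨h1, h2⟩) <;> split_ifs <;>
      exact ⟨by linarith, fun hx => by linarith⟩

section Dyn
variable {T : UnitAddCircle → UnitAddCircle} {X : Set UnitAddCircle}

lemma orbit_subset_of_periodic {x : UnitAddCircle} {n : ℕ} (hn : 0 < n) (h : T^[n] x = x) :
    {z : UnitAddCircle | ∃ m : ℕ, T^[m] x = z} ⊆ (fun k => T^[k] x) '' (Set.Iio n) := by
  rintro z ⟨m, rfl⟩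
  induction m using Nat.strong_induction_on with
  | _ m ih =>
    rcases lt_or_ge m n with hm | hm
    · exact ⟨m, hm, rfl⟩
    · have h2 : T^[m] x = T^[m - n] x := by
        conv_lhs => rw [show m = (m - n) + n by omega]
        rw [Function.iterate_add_apply, h]
      rw [h2]
      exact ih (m - n) (by omega)

lemma no_periodic (hmin : ∀ x ∈ X, ∀ y ∈ X, y ∈ closure {z : UnitAddCircle | ∃ n : ℕ, T^[n] x = z})
    (hinf : X.Infinite) {x : UnitAddCircle} (hx : x ∈ X) {n : ℕ} (hn : 0 < n) :
    T^[n] x ≠ x := by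
  intro h
  have hfin : ((fun k => T^[k] x) '' (Set.Iio n)).Finite := (Set.finite_Iio n).image _
  have hsub : X ⊆ (fun k => T^[k] x) '' (Set.Iio n) := by
    intro y hy
    have h1 := hmin x hx y hy
    have h2 : closure {z : UnitAddCircle | ∃ m : ℕ, T^[m] x = z}
        ⊆ (fun k => T^[k] x) '' (Set.Iio n) := by
      rw [← hfin.isClosed.closure_eq]
      exact closure_mono (orbit_subset_of_periodic hn h)
    exact h2 h1
  exact hinf (hfin.subset hsub)

lemma surj_on (hclosed : IsClosed X) (hmaps : Set.MapsTo T X X)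
    (hmin : ∀ x ∈ X, ∀ y ∈ X, y ∈ closure {z : UnitAddCircle | ∃ n : ℕ, T^[n] x = z})
    (hT : Continuous T) (hinf : X.Infinite) {z : UnitAddCircle} (hz : z ∈ X) :
    ∃ x ∈ X, T x = z := by
  obtain ⟨a, ha, b, hb, hab⟩ := hinf.nontrivial
  obtain ⟨x₀, hx₀, hx₀z⟩ : ∃ x₀ ∈ X, x₀ ≠ z := by
    rcases eq_or_ne a z with rfl | hne
    · exact ⟨b, hb, fun hbz => hab hbz.symm⟩
    · exact ⟨a, ha, hne⟩
  have horb : {w : UnitAddCircle | ∃ m : ℕ, T^[m] x₀ = w} ⊆ insert x₀ (T '' X) := by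
    rintro w ⟨m, rfl⟩
    cases m with
    | zero => exact Or.inl rfl
    | succ k =>
      right
      rw [Function.iterate_succ_apply']
      exact ⟨T^[k] x₀, hmaps.iterate k hx₀, rfl⟩
  have hcl : IsClosed (insert x₀ (T '' X)) := by
    have : IsCompact (T '' X) := (hclosed.isCompact).image hT
    rw [insert_eq]; exact isClosed_singleton.union this.isClosed
  have hzmem : z ∈ insert x₀ (T '' X) := by
    have h1 := hmin x₀ hx₀ z hz
    have h2 : closure {w : UnitAddCircle | ∃ m : ℕ, T^[m] x₀ = w} ⊆ insert x₀ (T '' X) := by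
      rw [← hcl.closure_eq]; exact closure_mono horb
    exact h2 h1
  rcases hzmem with rfl | ⟨x, hxX, hxz⟩
  · exact absurd rfl hx₀z
  · exact ⟨x, hxX, hxz⟩
end Dyn

def MinimalOn (T : UnitAddCircle → UnitAddCircle) (X : Set UnitAddCircle) : Prop :=
  ∀ x ∈ X, ∀ y ∈ X, y ∈ closure {z : UnitAddCircle | ∃ n : ℕ, T^[n] x = z}

def PreservesCyclicOrder (T : UnitAddCircle → UnitAddCircle) (X : Set UnitAddCircle) : Prop :=
  ∀ p ∈ X, ∀ q ∈ X, ∀ r ∈ X,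
    T p ≠ T q → T q ≠ T r → T r ≠ T p →
    sbtw p q r → sbtw (T p) (T q) (T r)

def IsRotational (T : UnitAddCircle → UnitAddCircle) (X : Set UnitAddCircle) : Prop :=
  IsClosed X ∧ Set.MapsTo T X X ∧ MinimalOn T X ∧ PreservesCyclicOrder T X

theorem endpoint_images
    (T : UnitAddCircle → UnitAddCircle) (hT : Continuous T)
    (hfib : ∀ y : UnitAddCircle, (T ⁻¹' {y}).Finite)
    (X : Set UnitAddCircle) (hrot : IsRotational T X)
    (hinf : X.Infinite) (hproper : X ≠ Set.univ)
    (h0 : (0 : UnitAddCircle) ∉ X)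
    (Xr : Set ℝ)
    (hXr : Xr = {r : ℝ | r ∈ Set.Ico (0:ℝ) 1 ∧ ((r : ℝ) : UnitAddCircle) ∈ X})
    (α β : ℝ) (hα : α = sInf Xr) (hβ : β = sSup Xr) :
    α < rep (T ((β : ℝ) : UnitAddCircle)) ∧
      rep (T ((β : ℝ) : UnitAddCircle)) ≤ rep (T ((α : ℝ) : UnitAddCircle)) ∧
      rep (T ((α : ℝ) : UnitAddCircle)) < β := by
  obtain ⟨hclosed, hmaps, hmin, hcyc⟩ := hrot
  set A : UnitAddCircle := ((α : ℝ) : UnitAddCircle) with hAdef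
  set B : UnitAddCircle := ((β : ℝ) : UnitAddCircle) with hBdef
  have h1X : ((1:ℝ) : UnitAddCircle) = 0 := AddCircle.coe_period 1
  have hXrIcc : Xr = Set.Icc (0:ℝ) 1 ∩ (fun r : ℝ => ((r:ℝ) : UnitAddCircle)) ⁻¹' X := by
    ext r
    simp only [hXr, Set.mem_setOf_eq, Set.mem_inter_iff, Set.mem_preimage, Set.mem_Icc,
      Set.mem_Ico]
    constructor
    · rintro ⟨⟨ha, hb⟩, hr⟩; exact ⟨⟨ha, hb.le⟩, hr⟩
    · rintro ⟨⟨ha, hb⟩, hr⟩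
      refine ⟨⟨ha, lt_of_le_of_ne hb ?_⟩, hr⟩
      rintro rfl
      rw [h1X] at hr; exact h0 hr
  have hXrclosed : IsClosed Xr := by
    rw [hXrIcc]
    exact isClosed_Icc.inter (hclosed.preimage (AddCircle.continuous_mk' 1))
  have hXrsub : Xr ⊆ Set.Ico (0:ℝ) 1 := by rw [hXr]; exact fun r hr => hr.1
  have hmemXr : ∀ z ∈ X, rep z ∈ Xr := by
    intro z hz; rw [hXr]; exact ⟨rep_mem z, by rw [coe_rep]; exact hz⟩
  have hbddA : BddAbove Xr := ⟨1, fun r hr => (hXrsub hr).2.le⟩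
  have hbddB : BddBelow Xr := ⟨0, fun r hr => (hXrsub hr).1⟩
  have hne : Xr.Nonempty := by
    obtain ⟨z, hz⟩ := hinf.nonempty; exact ⟨rep z, hmemXr z hz⟩
  have hαXr : α ∈ Xr := hα ▸ hXrclosed.csInf_mem hne hbddB
  have hβXr : β ∈ Xr := hβ ▸ hXrclosed.csSup_mem hne hbddA
  have hαIco : α ∈ Set.Ico (0:ℝ) 1 := hXrsub hαXr
  have hβIco : β ∈ Set.Ico (0:ℝ) 1 := hXrsub hβXr
  have hA : A ∈ X := by have h := hαXr; rw [hXr] at h; exact h.2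
  have hB : B ∈ X := by have h := hβXr; rw [hXr] at h; exact h.2
  have repα : rep A = α := rep_coe hαIco
  have repβ : rep B = β := rep_coe hβIco
  have hrepmem : ∀ z ∈ X, α ≤ rep z ∧ rep z ≤ β := fun z hz =>
    ⟨hα ▸ csInf_le hbddB (hmemXr z hz), hβ ▸ le_csSup hbddA (hmemXr z hz)⟩
  have hα0 : 0 < α := by
    refine lt_of_le_of_ne hαIco.1 fun h => h0 ?_
    have hh := hA
    rw [hAdef, ← h] at hh
    simpa using hh
  have hβ1 : β < 1 := hβIco.2
  have hinj : ∀ z w : UnitAddCircle, rep z = rep w → z = w := fun z w h => by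
    rw [← coe_rep z, ← coe_rep w, h]
  have hαβ : α < β := by
    have hle : α ≤ β := repβ ▸ (hrepmem _ hB).1
    refine hle.lt_of_ne fun h => ?_
    have hsub : X ⊆ {A} := by
      intro z hz
      have h5 := hrepmem z hz
      have : rep z = α := le_antisymm (h ▸ h5.2) h5.1
      simpa using hinj z A (this.trans repα.symm)
    exact hinf ((Set.finite_singleton _).subset hsub)
  have hAB : A ≠ B := fun h => hαβ.ne (by rw [← repα, ← repβ, h])
  have hfix : ∀ x ∈ X, T x ≠ x := fun x hx h =>
    no_periodic hmin hinf hx (n := 1) one_pos (by simpa using h)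
  have hsurj : ∀ z ∈ X, ∃ x ∈ X, T x = z := fun z hz =>
    surj_on hclosed hmaps hmin hT hinf hz
  have hsbtwA : ∀ x ∈ X, x ≠ A → x ≠ B → sbtw A x B := by
    intro x hx hxA hxB
    have hxm := hrepmem x hx
    have hxa : α < rep x :=
      lt_of_le_of_ne hxm.1 fun h => hxA (hinj x A (repα.symm ▸ h.symm))
    have hxb : rep x < β :=
      lt_of_le_of_ne hxm.2 fun h => hxB (hinj x B (repβ.symm ▸ h))
    have hs := (sbtw_coe_iff hαIco (rep_mem x) hβIco).mpr (Or.inl ⟨hxa, hxb⟩)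
    rwa [coe_rep x] at hs
  have hswap : ¬(T A = B ∧ T B = A) := by
    rintro ⟨hTA, hTB⟩
    have hF : (({A, B} : Set UnitAddCircle) ∪ (T ⁻¹' {T A} ∪ T ⁻¹' {T B})).Finite :=
      (((Set.finite_singleton B).insert A)).union ((hfib _).union (hfib _))
    obtain ⟨x, hxX, hxF⟩ := (hinf.diff hF).nonempty
    simp only [Set.mem_union, Set.mem_insert_iff, Set.mem_singleton_iff, Set.mem_preimage,
      not_or] at hxF
    obtain ⟨⟨hxA, hxB⟩, hxTA, hxTB⟩ := hxF
    have hsb := hcyc _ hA _ hxX _ hB (fun h => hxTA h.symm) hxTB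
      (by rw [hTA, hTB]; exact hAB) (hsbtwA x hxX hxA hxB)
    rw [hTA, hTB] at hsb
    have hsb' : sbtw ((β:ℝ) : UnitAddCircle) ((rep (T x) : ℝ) : UnitAddCircle)
        ((α:ℝ) : UnitAddCircle) := by
      rw [coe_rep, ← hAdef, ← hBdef]; exact hsb
    have h4 := (sbtw_coe_iff hβIco (rep_mem _) hαIco).mp hsb'
    have h5 := hrepmem _ (hmaps hxX)
    rcases h4 with ⟨h6, h7⟩ | ⟨h6, h7⟩ | ⟨h6, h7⟩ <;> linarith
  have hTAX : T A ∈ X := hmaps hA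
  have hTBX : T B ∈ X := hmaps hB
  have hcoeu : ((rep (T A) : ℝ) : UnitAddCircle) = T A := coe_rep _
  have hcoew : ((rep (T B) : ℝ) : UnitAddCircle) = T B := coe_rep _
  have humem := hrepmem _ hTAX
  have hwmem := hrepmem _ hTBX
  have huIco : rep (T A) ∈ Set.Ico (0:ℝ) 1 := rep_mem _
  have hwIco : rep (T B) ∈ Set.Ico (0:ℝ) 1 := rep_mem _
  -- Part 2 : rep (T B) ≤ rep (T A)
  have h2 : rep (T B) ≤ rep (T A) := by
    by_contra hlt
    push_neg at hlt
    have hTAB : T A ≠ T B := fun h => hlt.ne (congrArg rep h)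
    have hall : ∀ z ∈ X, rep (T A) ≤ rep z := by
      intro z hz
      obtain ⟨x, hxX, rfl⟩ := hsurj z hz
      by_cases e1 : T x = T A
      · rw [e1]
      by_cases e2 : T x = T B
      · rw [e2]; exact hlt.le
      have hxA : x ≠ A := fun h => e1 (by rw [h])
      have hxB : x ≠ B := fun h => e2 (by rw [h])
      have hsb := hcyc _ hA _ hxX _ hB (fun h => e1 h.symm) e2
        (fun h => hTAB h.symm) (hsbtwA x hxX hxA hxB)
      have hsb' : sbtw ((rep (T A) : ℝ) : UnitAddCircle) ((rep (T x) : ℝ) : UnitAddCircle)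
          ((rep (T B) : ℝ) : UnitAddCircle) := by rw [hcoeu, hcoew, coe_rep]; exact hsb
      have h4 := (sbtw_coe_iff huIco (rep_mem _) hwIco).mp hsb'
      have h5 := hrepmem _ (hmaps hxX)
      rcases h4 with ⟨h6, h7⟩ | ⟨h6, h7⟩ | ⟨h6, h7⟩ <;> linarith
    have hured : rep (T A) ≤ α := repα ▸ hall _ hA
    have hueq : rep (T A) = α := le_antisymm hured humem.1
    exact hfix _ hA (by rw [← hcoeu, hueq])
  -- Part 1 : α < rep (T B)
  have h1 : α < rep (T B) := by
    refine hwmem.1.lt_of_ne fun heq => ?_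
    have hTBA : T B = A := by rw [← hcoew, ← heq]
    have hTAB' : T A ≠ B := fun h => hswap ⟨h, hTBA⟩
    have hTAA : T A ≠ A := hfix _ hA
    have huα : α < rep (T A) :=
      lt_of_le_of_ne humem.1 fun h => hTAA (by rw [← hcoeu, ← h])
    have huβ : rep (T A) < β :=
      lt_of_le_of_ne humem.2 fun h => hTAB' (by rw [← hcoeu, h])
    have hall : ∀ z ∈ X, z ≠ A → rep (T A) ≤ rep z := by
      intro z hz hzA
      obtain ⟨x, hxX, rfl⟩ := hsurj z hz
      by_cases e1 : T x = T A
      · rw [e1]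
      by_cases e2 : T x = T B
      · exact absurd (e2.trans hTBA) hzA
      have hxA : x ≠ A := fun h => e1 (by rw [h])
      have hxB : x ≠ B := fun h => e2 (by rw [h])
      have hTBA' : T B ≠ T A := by rw [hTBA]; exact fun h => hTAA h.symm
      have hsb := hcyc _ hA _ hxX _ hB (fun h => e1 h.symm) e2 hTBA'
        (hsbtwA x hxX hxA hxB)
      rw [hTBA] at hsb
      have hsb' : sbtw ((rep (T A) : ℝ) : UnitAddCircle) ((rep (T x) : ℝ) : UnitAddCircle)
          ((α:ℝ) : UnitAddCircle) := by
        rw [hcoeu, coe_rep, ← hAdef]; exact hsb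
      have h4 := (sbtw_coe_iff huIco (rep_mem _) hαIco).mp hsb'
      have h5 := hrepmem _ (hmaps hxX)
      rcases h4 with ⟨h6, h7⟩ | ⟨h6, h7⟩ | ⟨h6, h7⟩ <;> linarith
    have hXsub : X \ {A} ⊆ (fun r : ℝ => ((r:ℝ) : UnitAddCircle)) '' (Set.Icc (rep (T A)) β) := by
      rintro z ⟨hz, hzA⟩
      exact ⟨rep z, ⟨hall z hz hzA, (hrepmem z hz).2⟩, coe_rep z⟩
    have hSclosed : IsClosed ((fun r : ℝ => ((r:ℝ) : UnitAddCircle)) '' (Set.Icc (rep (T A)) β)) :=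
      (isCompact_Icc.image (AddCircle.continuous_mk' 1)).isClosed
    have hAnot : A ∉ (fun r : ℝ => ((r:ℝ) : UnitAddCircle)) '' (Set.Icc (rep (T A)) β) := by
      rintro ⟨r, hr, hrA⟩
      have hrA' : ((r:ℝ) : UnitAddCircle) = A := hrA
      have hrIco : r ∈ Set.Ico (0:ℝ) 1 :=
        ⟨le_trans (le_trans hα0.le huα.le) hr.1, lt_of_le_of_lt hr.2 hβ1⟩
      have hrα : r = α := by rw [← rep_coe hrIco, hrA', repα]
      have := hr.1
      linarith
    have hnotcl : A ∉ closure (X \ {A}) := fun hc =>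
      hAnot (by rw [← hSclosed.closure_eq]; exact closure_mono hXsub hc)
    have horbA : A ∈ closure {z : UnitAddCircle | ∃ n : ℕ, T^[n] (T A) = z} :=
      hmin (T A) hTAX A hA
    have hAorb : A ∈ {z : UnitAddCircle | ∃ n : ℕ, T^[n] (T A) = z} := by
      by_contra hA'
      apply hnotcl
      refine closure_mono ?_ horbA
      rintro zz ⟨m, rfl⟩
      refine ⟨(hmaps.iterate m) hTAX, fun hzzA => ?_⟩
      exact hA' ⟨m, by simpa using hzzA⟩
    obtain ⟨n, hn⟩ := hAorb
    exact no_periodic hmin hinf hA (n := n + 1) n.succ_pos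
      (by rw [Function.iterate_succ_apply]; exact hn)
  -- Part 3 : rep (T A) < β
  have h3 : rep (T A) < β := by
    refine humem.2.lt_of_ne fun heq => ?_
    have hTAB : T A = B := by rw [← hcoeu, heq]
    have hTBA' : T B ≠ A := fun h => hswap ⟨hTAB, h⟩
    have hTBB : T B ≠ B := hfix _ hB
    have hwα : α < rep (T B) :=
      lt_of_le_of_ne hwmem.1 fun h => hTBA' (by rw [← hcoew, ← h])
    have hwβ : rep (T B) < β :=
      lt_of_le_of_ne hwmem.2 fun h => hTBB (by rw [← hcoew, h])
    have hall : ∀ z ∈ X, z ≠ B → rep z ≤ rep (T B) := by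
      intro z hz hzB
      obtain ⟨x, hxX, rfl⟩ := hsurj z hz
      by_cases e2 : T x = T B
      · rw [e2]
      by_cases e1 : T x = T A
      · exact absurd (e1.trans hTAB) hzB
      have hxA : x ≠ A := fun h => e1 (by rw [h])
      have hxB : x ≠ B := fun h => e2 (by rw [h])
      have hTBA'' : T B ≠ T A := by rw [hTAB]; exact fun h => hTBB h
      have hsb := hcyc _ hA _ hxX _ hB (fun h => e1 h.symm) e2 hTBA''
        (hsbtwA x hxX hxA hxB)
      rw [hTAB] at hsb
      have hsb' : sbtw ((β:ℝ) : UnitAddCircle) ((rep (T x) : ℝ) : UnitAddCircle)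
          ((rep (T B) : ℝ) : UnitAddCircle) := by
        rw [hcoew, coe_rep, ← hBdef]; exact hsb
      have h4 := (sbtw_coe_iff hβIco (rep_mem _) hwIco).mp hsb'
      have h5 := hrepmem _ (hmaps hxX)
      have hvβ : rep (T x) < β :=
        lt_of_le_of_ne h5.2 fun h => hzB (hinj _ B (repβ.symm ▸ h))
      rcases h4 with ⟨h6, h7⟩ | ⟨h6, h7⟩ | ⟨h6, h7⟩ <;> linarith
    have hXsub : X \ {B} ⊆ (fun r : ℝ => ((r:ℝ) : UnitAddCircle)) '' (Set.Icc α (rep (T B))) := by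
      rintro z ⟨hz, hzB⟩
      exact ⟨rep z, ⟨(hrepmem z hz).1, hall z hz hzB⟩, coe_rep z⟩
    have hSclosed : IsClosed ((fun r : ℝ => ((r:ℝ) : UnitAddCircle)) '' (Set.Icc α (rep (T B)))) :=
      (isCompact_Icc.image (AddCircle.continuous_mk' 1)).isClosed
    have hBnot : B ∉ (fun r : ℝ => ((r:ℝ) : UnitAddCircle)) '' (Set.Icc α (rep (T B))) := by
      rintro ⟨r, hr, hrB⟩
      have hrB' : ((r:ℝ) : UnitAddCircle) = B := hrB
      have hrIco : r ∈ Set.Ico (0:ℝ) 1 :=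
        ⟨le_trans hα0.le hr.1, lt_of_le_of_lt hr.2 (lt_trans hwβ hβ1)⟩
      have hrβ : r = β := by rw [← rep_coe hrIco, hrB', repβ]
      have := hr.2
      linarith
    have hnotcl : B ∉ closure (X \ {B}) := fun hc =>
      hBnot (by rw [← hSclosed.closure_eq]; exact closure_mono hXsub hc)
    have horbB : B ∈ closure {z : UnitAddCircle | ∃ n : ℕ, T^[n] (T B) = z} :=
      hmin (T B) hTBX B hB
    have hBorb : B ∈ {z : UnitAddCircle | ∃ n : ℕ, T^[n] (T B) = z} := by
      by_contra hB'
      apply hnotcl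
      refine closure_mono ?_ horbB
      rintro zz ⟨m, rfl⟩
      refine ⟨(hmaps.iterate m) hTBX, fun hzzB => ?_⟩
      exact hB' ⟨m, by simpa using hzzB⟩
    obtain ⟨n, hn⟩ := hBorb
    exact no_periodic hmin hinf hB (n := n + 1) n.succ_pos
      (by rw [Function.iterate_succ_apply]; exact hn)
  exact ⟨h1, h2, h3⟩
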